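/- arXiv:1708.04990 — 11 statements merged into one kernel-verified Lean document; each statement's English description precedes it below -/
import Mathlib

section
/- Let P be a partially ordered set, K a join-completion of P, and L a subset of K containing P, equipped with the induced order. Then L is a join-completion of P if and only if L is a closure system of K (that is, for every x in K, the set {p in L : x ≤ p} has a least element). -/
/-- Let `P ⊆ L ⊆ K` where `K` is a complete lattice in which `P` is
join-dense (so `K` is a join-completion of `P`).  Then `L`, with the induced
order, is a join-completion of `P` (i.e. every subset of `L` has a least upper
bound within `L`, and every element of `L` is a join within `L` of elements of
`P`) if and only if `L` is a closure system of `K` (for every `x ∈ K`, the set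
`{p ∈ L : x ≤ p}` has a least element). -/
theorem joinCompletion_iff_closureSystem {K : Type*} [CompleteLattice K]
    (P L : Set K) (hPL : P ⊆ L)
    (hK : ∀ x : K, ∃ X ⊆ P, IsLUB X x) :
    ((∀ S : Set K, S ⊆ L →
        ∃ a ∈ L, (∀ s ∈ S, s ≤ a) ∧ ∀ b ∈ L, (∀ s ∈ S, s ≤ b) → a ≤ b) ∧
     (∀ l ∈ L, ∃ X ⊆ P, (∀ x ∈ X, x ≤ l) ∧ ∀ b ∈ L, (∀ x ∈ X, x ≤ b) → l ≤ b))
    ↔ (∀ x : K, ∃ a ∈ L, x ≤ a ∧ ∀ b ∈ L, x ≤ b → a ≤ b) := by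
  constructor
  · rintro ⟨h1, _⟩ x
    obtain ⟨X, hXP, hlub⟩ := hK x
    obtain ⟨a, haL, hub, hleast⟩ := h1 X (hXP.trans hPL)
    refine ⟨a, haL, hlub.2 hub, fun b hbL hxb => ?_⟩
    exact hleast b hbL fun s hs => (hlub.1 hs).trans hxb
  · intro hc
    constructor
    · intro S hSL
      obtain ⟨a, haL, hxa, hleast⟩ := hc (sSup S)
      exact ⟨a, haL, fun s hs => (le_sSup hs).trans hxa,
        fun b hbL hb => hleast b hbL (sSup_le hb)⟩
    · intro l hl
      obtain ⟨X, hXP, hlub⟩ := hK l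
      exact ⟨X, hXP, fun x hx => hlub.1 hx, fun b hbL hb => hlub.2 hb⟩
end

section
/- Let P be a partially ordered monoid and L a join-extension of P which is also a partially ordered monoid with multiplication extending that of P. Then for all a, b ∈ P, if the left residual a\b = max{x ∈ P : ax ≤ b} exists in P, then max{x ∈ L : ax ≤ b} exists in L and equals a\b (and similarly for right residuals). -/
/-- Let `P` be a pomonoid (modeled as a join-dense submonoid of a
pomonoid `L`, with the multiplication of `L` extending that of `P`).  For
`a, b ∈ P`: if `max {x ∈ P : a*x ≤ b}` exists (witnessed by `c`), then
`max {x ∈ L : a*x ≤ b}` exists and equals `c`; similarly for right residuals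
(witnessed by `c'`). -/
theorem residuals_preserved_in_joinExtension {L : Type*} [Monoid L] [PartialOrder L]
    (hmul : ∀ a b c d : L, a ≤ b → c ≤ d → a * c ≤ b * d)
    (P : Set L) (h1 : (1 : L) ∈ P) (hPmul : ∀ x ∈ P, ∀ y ∈ P, x * y ∈ P)
    (hdense : ∀ l : L, ∃ X ⊆ P, IsLUB X l)
    (a b : L) (ha : a ∈ P) (hb : b ∈ P) :
    (∀ c ∈ P, (a * c ≤ b ∧ ∀ x ∈ P, a * x ≤ b → x ≤ c) →
      (a * c ≤ b ∧ ∀ x : L, a * x ≤ b → x ≤ c)) ∧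
    (∀ c' ∈ P, (c' * a ≤ b ∧ ∀ x ∈ P, x * a ≤ b → x ≤ c') →
      (c' * a ≤ b ∧ ∀ x : L, x * a ≤ b → x ≤ c')) := by
  constructor
  · rintro c hc ⟨hac, hmax⟩
    refine ⟨hac, fun x hx => ?_⟩
    obtain ⟨X, hXP, hlub⟩ := hdense x
    exact hlub.2 fun y hy => hmax y (hXP hy)
      (le_trans (hmul a a y x le_rfl (hlub.1 hy)) hx)
  · rintro c hc ⟨hac, hmax⟩
    refine ⟨hac, fun x hx => ?_⟩
    obtain ⟨X, hXP, hlub⟩ := hdense x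
    exact hlub.2 fun y hy => hmax y (hXP hy)
      (le_trans (hmul y x a a (hlub.1 hy) le_rfl) hx)
end

section
/- The Dedekind-MacNeille completion of a residuated partially ordered monoid P carries a unique structure of a (complete) residuated lattice whose multiplication extends that of P, and the embedding of P into its Dedekind-MacNeille completion preserves products, residuals, and all existing meets. -/
/-- The Dedekind-MacNeille completion of a poset `P`: the collection of subsets
that are intersections of principal down-sets, i.e. the cuts
`A = lowerBounds (upperBounds A)`. -/
def DMset (P : Type*) [PartialOrder P] : Set (Set P) :=
  {A | lowerBounds (upperBounds A) = A}

/-- The Dedekind-MacNeille completion as a poset (ordered by inclusion). -/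
def DM (P : Type*) [PartialOrder P] : Type _ := {A : Set P // A ∈ DMset P}

instance (P : Type*) [PartialOrder P] : PartialOrder (DM P) :=
  Subtype.partialOrder _

theorem Iic_mem_DMset {P : Type*} [PartialOrder P] (p : P) : Set.Iic p ∈ DMset P := by
  apply Set.Subset.antisymm
  · intro q hq
    exact hq (fun x hx => hx)
  · intro q hq r hr
    exact le_trans hq (hr (le_refl p))

/-- The canonical embedding of `P` into its Dedekind-MacNeille completion. -/
def dmEmb {P : Type*} [PartialOrder P] (p : P) : DM P := ⟨Set.Iic p, Iic_mem_DMset p⟩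

namespace DMproof

variable {P : Type*} [PartialOrder P]

def c (A : Set P) : Set P := lowerBounds (upperBounds A)

lemma le_c (A : Set P) : A ⊆ c A := fun _ ha _ hz => hz ha

lemma c_mono {A B : Set P} (h : A ⊆ B) : c A ⊆ c B :=
  fun _ hx _ hz => hx (fun _ ha => hz (h ha))

lemma ub_c (A : Set P) : upperBounds (c A) = upperBounds A := by
  apply subset_antisymm (upperBounds_mono_set (le_c A))
  intro z hz t ht
  exact ht hz

lemma c_mem (A : Set P) : c A ∈ DMset P := by
  show lowerBounds (upperBounds (c A)) = c A
  rw [ub_c]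
  rfl

lemma c_eq {A : Set P} (h : A ∈ DMset P) : c A = A := h

lemma c_min {A B : Set P} (hB : B ∈ DMset P) (h : A ⊆ B) : c A ⊆ B := by
  have h2 : c A ⊆ c B := c_mono h
  rwa [c_eq hB] at h2

lemma closed_downset {B : Set P} (hB : B ∈ DMset P) {x y : P} (hxy : x ≤ y) (hy : y ∈ B) :
    x ∈ B := by
  rw [← c_eq hB] at hy ⊢
  exact fun z hz => le_trans hxy (hy hz)

lemma DM_le {A B : DM P} : A ≤ B ↔ A.1 ⊆ B.1 := Iff.rfl

lemma isLUB_val {S : Set (DM P)} {s : DM P} (h : IsLUB S s) :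
    s.1 = c (⋃ x ∈ S, (x : DM P).1) := by
  apply subset_antisymm
  · have hub : (⟨c (⋃ x ∈ S, (x : DM P).1), c_mem _⟩ : DM P) ∈ upperBounds S := by
      intro x hx
      exact DM_le.2 ((Set.subset_biUnion_of_mem hx).trans (le_c _))
    exact h.2 hub
  · exact c_min s.2 (Set.iUnion₂_subset fun x hx => h.1 hx)

lemma density (A : DM P) : IsLUB (dmEmb '' A.1) A := by
  constructor
  · rintro _ ⟨p, hp, rfl⟩
    exact fun t ht => closed_downset A.2 ht hp
  · intro B hB a ha
    exact hB (Set.mem_image_of_mem _ ha) (le_refl a)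

end DMproof

namespace DMproof

variable {P : Type*} [PartialOrder P] [Monoid P] {ld rd : P → P → P}

lemma mul_le_l (hrd : ∀ x y z : P, x * y ≤ z ↔ x ≤ rd z y) {x x' : P} (h : x ≤ x') (y : P) :
    x * y ≤ x' * y :=
  (hrd x y (x' * y)).2 (h.trans ((hrd x' y (x' * y)).1 le_rfl))

lemma mul_le_r (hld : ∀ x y z : P, x * y ≤ z ↔ y ≤ ld x z) {y y' : P} (h : y ≤ y') (x : P) :
    x * y ≤ x * y' :=
  (hld x y (x * y')).2 (h.trans ((hld x y' (x * y')).1 le_rfl))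

def mset (A B : Set P) : Set P := Set.image2 (· * ·) A B

section
variable (hld : ∀ x y z : P, x * y ≤ z ↔ y ≤ ld x z)
variable (hrd : ∀ x y z : P, x * y ≤ z ↔ x ≤ rd z y)
include hld hrd

lemma key {A B : Set P} {x y : P} (hx : x ∈ c A) (hy : y ∈ c B) :
    x * y ∈ c (mset A B) := by
  intro z hz
  have h1 : ∀ a ∈ A, a * y ≤ z := by
    intro a ha
    rw [hld]
    apply hy
    intro b hb
    rw [← hld]
    exact hz (Set.mem_image2_of_mem ha hb)
  rw [hrd]
  apply hx
  intro a ha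
  rw [← hrd]
  exact h1 a ha

lemma c_mset_cl (A B : Set P) : c (mset (c A) (c B)) = c (mset A B) := by
  apply subset_antisymm
  · apply c_min (c_mem _)
    rintro _ ⟨a, ha, b, hb, rfl⟩
    exact key hld hrd ha hb
  · exact c_mono (Set.image2_subset (le_c A) (le_c B))

lemma c_mset_left (A B : Set P) : c (mset (c A) B) = c (mset A B) := by
  apply subset_antisymm
  · calc c (mset (c A) B) ⊆ c (mset (c A) (c B)) :=
          c_mono (Set.image2_subset subset_rfl (le_c B))
      _ = c (mset A B) := c_mset_cl hld hrd A B
  · exact c_mono (Set.image2_subset (le_c A) subset_rfl)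

lemma c_mset_right (A B : Set P) : c (mset A (c B)) = c (mset A B) := by
  apply subset_antisymm
  · calc c (mset A (c B)) ⊆ c (mset (c A) (c B)) :=
          c_mono (Set.image2_subset (le_c A) subset_rfl)
      _ = c (mset A B) := c_mset_cl hld hrd A B
  · exact c_mono (Set.image2_subset subset_rfl (le_c B))

end

def mmul (A B : DM P) : DM P := ⟨c (mset A.1 B.1), c_mem _⟩

section
variable (hld : ∀ x y z : P, x * y ≤ z ↔ y ≤ ld x z)
variable (hrd : ∀ x y z : P, x * y ≤ z ↔ x ≤ rd z y)
include hld hrd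

lemma mmul_emb (p q : P) : mmul (dmEmb p) (dmEmb q) = dmEmb (p * q) := by
  apply Subtype.ext
  show c (mset (Set.Iic p) (Set.Iic q)) = Set.Iic (p * q)
  apply subset_antisymm
  · apply c_min (Iic_mem_DMset _)
    rintro _ ⟨x, hx, y, hy, rfl⟩
    exact (mul_le_l hrd hx y).trans (mul_le_r hld hy p)
  · intro t ht
    exact closed_downset (c_mem _) ht
      (le_c _ (Set.mem_image2_of_mem (le_refl p) (le_refl q)))

lemma mmul_assoc (A B C : DM P) : mmul (mmul A B) C = mmul A (mmul B C) := by
  apply Subtype.ext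
  show c (mset (c (mset A.1 B.1)) C.1) = c (mset A.1 (c (mset B.1 C.1)))
  rw [c_mset_left hld hrd, c_mset_right hld hrd]
  show c (Set.image2 (· * ·) (Set.image2 (· * ·) A.1 B.1) C.1)
      = c (Set.image2 (· * ·) A.1 (Set.image2 (· * ·) B.1 C.1))
  rw [Set.image2_assoc mul_assoc]

omit hld in
lemma mmul_one_left (A : DM P) : mmul (dmEmb 1) A = A := by
  apply Subtype.ext
  show c (mset (Set.Iic 1) A.1) = A.1
  have h : mset (Set.Iic 1) A.1 = A.1 := by
    apply subset_antisymm
    · rintro _ ⟨x, hx, a, ha, rfl⟩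
      exact closed_downset A.2 (by simpa using mul_le_l hrd hx a) ha
    · intro a ha
      exact one_mul a ▸ Set.mem_image2_of_mem (le_refl 1) ha
  rw [h, c_eq A.2]

omit hrd in
lemma mmul_one_right (A : DM P) : mmul A (dmEmb 1) = A := by
  apply Subtype.ext
  show c (mset A.1 (Set.Iic 1)) = A.1
  have h : mset A.1 (Set.Iic 1) = A.1 := by
    apply subset_antisymm
    · rintro _ ⟨a, ha, x, hx, rfl⟩
      exact closed_downset A.2 (by simpa using mul_le_r hld hx a) ha
    · intro a ha
      exact mul_one a ▸ Set.mem_image2_of_mem ha (le_refl 1)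
  rw [h, c_eq A.2]

omit hld hrd in
lemma mmul_mono_right (A : DM P) {B B' : DM P} (h : B ≤ B') : mmul A B ≤ mmul A B' :=
  c_mono (Set.image2_subset subset_rfl h)

omit hld hrd in
lemma mmul_mono_left (A : DM P) {B B' : DM P} (h : B ≤ B') : mmul B A ≤ mmul B' A :=
  c_mono (Set.image2_subset h subset_rfl)

lemma mmul_lub_right (A : DM P) {S : Set (DM P)} {s : DM P} (h : IsLUB S s) :
    IsLUB ((fun x => mmul A x) '' S) (mmul A s) := by
  constructor
  · rintro _ ⟨x, hx, rfl⟩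
    exact mmul_mono_right A (h.1 hx)
  · intro B hB
    show c (mset A.1 s.1) ⊆ B.1
    apply c_min B.2
    rintro _ ⟨a, ha, t, ht, rfl⟩
    rw [isLUB_val h] at ht
    rw [← c_eq B.2]
    intro z hz
    show a * t ≤ z
    rw [hld]
    apply ht
    intro u hu
    obtain ⟨x, hx2⟩ := Set.mem_iUnion.1 hu
    obtain ⟨hxS, hu2⟩ := Set.mem_iUnion.1 hx2
    rw [← hld]
    exact hz (hB (Set.mem_image_of_mem _ hxS) (le_c _ (Set.mem_image2_of_mem ha hu2)))

lemma mmul_lub_left (A : DM P) {S : Set (DM P)} {s : DM P} (h : IsLUB S s) :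
    IsLUB ((fun x => mmul x A) '' S) (mmul s A) := by
  constructor
  · rintro _ ⟨x, hx, rfl⟩
    exact mmul_mono_left A (h.1 hx)
  · intro B hB
    show c (mset s.1 A.1) ⊆ B.1
    apply c_min B.2
    rintro _ ⟨t, ht, a, ha, rfl⟩
    rw [isLUB_val h] at ht
    rw [← c_eq B.2]
    intro z hz
    show t * a ≤ z
    rw [hrd]
    apply ht
    intro u hu
    obtain ⟨x, hx2⟩ := Set.mem_iUnion.1 hu
    obtain ⟨hxS, hu2⟩ := Set.mem_iUnion.1 hx2
    rw [← hrd]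
    exact hz (hB (Set.mem_image_of_mem _ hxS) (le_c _ (Set.mem_image2_of_mem hu2 ha)))

end
end DMproof

namespace DMproof
variable {P : Type*} [PartialOrder P] [Monoid P] {ld rd : P → P → P}

section
variable (hld : ∀ x y z : P, x * y ≤ z ↔ y ≤ ld x z)
variable (hrd : ∀ x y z : P, x * y ≤ z ↔ x ≤ rd z y)
include hld hrd

lemma mmul_unique (m : DM P → DM P → DM P)
    (hm1 : ∀ p q : P, m (dmEmb p) (dmEmb q) = dmEmb (p * q))
    (hm4 : ∀ (A : DM P) (S : Set (DM P)) (s : DM P),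
      IsLUB S s → IsLUB ((fun x => m A x) '' S) (m A s))
    (hm5 : ∀ (A : DM P) (S : Set (DM P)) (s : DM P),
      IsLUB S s → IsLUB ((fun x => m x A) '' S) (m s A)) :
    m = mmul := by
  have step1 : ∀ (p : P) (B : DM P), m (dmEmb p) B = mmul (dmEmb p) B := by
    intro p B
    have d := density B
    have l1 := hm4 (dmEmb p) _ _ d
    have l2 := mmul_lub_right hld hrd (dmEmb p) d
    rw [Set.image_image] at l1 l2
    have he : (fun q => m (dmEmb p) (dmEmb q)) '' B.1
        = (fun q => mmul (dmEmb p) (dmEmb q)) '' B.1 := by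
      apply Set.image_congr
      intro q _
      rw [hm1, mmul_emb hld hrd]
    rw [he] at l1
    exact l1.unique l2
  funext A B
  have d := density A
  have l1 := hm5 B _ _ d
  have l2 := mmul_lub_left hld hrd B d
  rw [Set.image_image] at l1 l2
  have he : (fun p => m (dmEmb p) B) '' A.1 = (fun p => mmul (dmEmb p) B) '' A.1 :=
    Set.image_congr fun p _ => step1 p B
  rw [he] at l1
  exact l1.unique l2

lemma mmul_resid_left (p q : P) (C : DM P) :
    mmul (dmEmb p) C ≤ dmEmb q ↔ C ≤ dmEmb (ld p q) := by
  rw [DM_le, DM_le]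
  show c (mset (Set.Iic p) C.1) ⊆ Set.Iic q ↔ C.1 ⊆ Set.Iic (ld p q)
  constructor
  · intro h t ht
    show t ≤ ld p q
    rw [← hld]
    exact h (le_c _ (Set.mem_image2_of_mem (le_refl p) ht))
  · intro h
    apply c_min (Iic_mem_DMset q)
    rintro _ ⟨x, hx, t, ht, rfl⟩
    show x * t ≤ q
    exact (mul_le_l hrd hx t).trans ((hld p t q).2 (h ht))

lemma mmul_resid_right (p q : P) (C : DM P) :
    mmul C (dmEmb p) ≤ dmEmb q ↔ C ≤ dmEmb (rd q p) := by
  rw [DM_le, DM_le]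
  show c (mset C.1 (Set.Iic p)) ⊆ Set.Iic q ↔ C.1 ⊆ Set.Iic (rd q p)
  constructor
  · intro h t ht
    show t ≤ rd q p
    rw [← hrd]
    exact h (le_c _ (Set.mem_image2_of_mem ht (le_refl p)))
  · intro h
    apply c_min (Iic_mem_DMset q)
    rintro _ ⟨t, ht, x, hx, rfl⟩
    show t * x ≤ q
    exact (mul_le_r hld hx t).trans ((hrd t p q).2 (h ht))

end
end DMproof

open DMproof

/-- The Dedekind-MacNeille completion of a residuated pomonoid `P`
carries a unique structure of a complete residuated lattice whose
multiplication extends that of `P` (i.e. a unique monoid operation with unit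
the image of `1`, preserving arbitrary joins in each coordinate, extending the
multiplication of `P`); moreover the embedding `P ↪ DM P` is an order
embedding preserving products, both residuals, and all existing meets. -/
theorem dedekindMacNeille_residuated_lattice {P : Type*} [PartialOrder P] [Monoid P]
    (ld rd : P → P → P)
    (hld : ∀ x y z : P, x * y ≤ z ↔ y ≤ ld x z)
    (hrd : ∀ x y z : P, x * y ≤ z ↔ x ≤ rd z y) :
    (∃! m : DM P → DM P → DM P,
      (∀ p q : P, m (dmEmb p) (dmEmb q) = dmEmb (p * q)) ∧
      (∀ A B C : DM P, m (m A B) C = m A (m B C)) ∧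
      (∀ A : DM P, m (dmEmb 1) A = A ∧ m A (dmEmb 1) = A) ∧
      (∀ (A : DM P) (S : Set (DM P)) (s : DM P),
        IsLUB S s → IsLUB ((fun x => m A x) '' S) (m A s)) ∧
      (∀ (A : DM P) (S : Set (DM P)) (s : DM P),
        IsLUB S s → IsLUB ((fun x => m x A) '' S) (m s A))) ∧
    -- the embedding is an order embedding
    (∀ p q : P, dmEmb p ≤ dmEmb q ↔ p ≤ q) ∧
    -- for the above multiplication, the embedding preserves both residuals
    (∀ m : DM P → DM P → DM P,
      ((∀ p q : P, m (dmEmb p) (dmEmb q) = dmEmb (p * q)) ∧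
       (∀ A B C : DM P, m (m A B) C = m A (m B C)) ∧
       (∀ A : DM P, m (dmEmb 1) A = A ∧ m A (dmEmb 1) = A) ∧
       (∀ (A : DM P) (S : Set (DM P)) (s : DM P),
         IsLUB S s → IsLUB ((fun x => m A x) '' S) (m A s)) ∧
       (∀ (A : DM P) (S : Set (DM P)) (s : DM P),
         IsLUB S s → IsLUB ((fun x => m x A) '' S) (m s A))) →
      ∀ p q : P, ∀ C : DM P,
        (m (dmEmb p) C ≤ dmEmb q ↔ C ≤ dmEmb (ld p q)) ∧
        (m C (dmEmb p) ≤ dmEmb q ↔ C ≤ dmEmb (rd q p))) ∧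
    -- the embedding preserves all existing meets
    (∀ (X : Set P) (a : P), IsGLB X a → IsGLB (dmEmb '' X) (dmEmb a)) := by
  refine ⟨⟨mmul, ⟨mmul_emb hld hrd, mmul_assoc hld hrd,
      fun A => ⟨mmul_one_left hrd A, mmul_one_right hld A⟩,
      fun A S s h => mmul_lub_right hld hrd A h,
      fun A S s h => mmul_lub_left hld hrd A h⟩,
      fun m hm => mmul_unique hld hrd m hm.1 hm.2.2.2.1 hm.2.2.2.2⟩,
    ?_, ?_, ?_⟩
  · intro p q
    rw [DM_le]
    exact Set.Iic_subset_Iic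
  · intro m hm p q C
    have hmeq : m = mmul := mmul_unique hld hrd m hm.1 hm.2.2.2.1 hm.2.2.2.2
    subst hmeq
    exact ⟨mmul_resid_left hld hrd p q C, mmul_resid_right hld hrd p q C⟩
  · intro X a ha
    constructor
    · rintro _ ⟨x, hx, rfl⟩
      exact DM_le.2 (Set.Iic_subset_Iic.2 (ha.1 hx))
    · intro B hB
      rw [DM_le]
      intro t ht
      exact ha.2 (fun x hx => hB (Set.mem_image_of_mem _ hx) ht)
end

section
/- The Dedekind-MacNeille completion of an implicative semilattice (a meet-semilattice with top in which meet is residuated) is a Heyting algebra. -/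
lemma lbu_mem {P : Type*} [PartialOrder P] (S : Set P) :
    lowerBounds S ∈ DMset P := by
  apply subset_antisymm
  · exact lowerBounds_mono_set (subset_upperBounds_lowerBounds S)
  · exact subset_lowerBounds_upperBounds _

lemma cut_down {P : Type*} [PartialOrder P] (A : DM P) {x y : P}
    (hx : x ∈ A.1) (hyx : y ≤ x) : y ∈ A.1 := by
  rw [← A.2] at hx ⊢
  exact fun u hu => hyx.trans (hx hu)

/-- The Dedekind-MacNeille completion of an implicative
semilattice (a meet-semilattice with top in which meet is residuated) is a
Heyting algebra: it has a top and a bottom element, binary meets are given by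
intersection, and meet is residuated. -/
theorem dedekindMacNeille_heyting {P : Type*} [SemilatticeInf P] [OrderTop P]
    (himp : P → P → P)
    (hres : ∀ a b x : P, a ⊓ x ≤ b ↔ x ≤ himp a b) :
    -- meets in the completion are intersections
    (∀ A B : DM P, A.1 ∩ B.1 ∈ DMset P) ∧
    -- top and bottom exist
    (∃ t : DM P, ∀ A : DM P, A ≤ t) ∧
    (∃ bot : DM P, ∀ A : DM P, bot ≤ A) ∧
    -- meet is residuated: a Heyting implication exists
    (∃ h : DM P → DM P → DM P, ∀ A B C : DM P,
      (A.1 ∩ C.1 ⊆ B.1) ↔ C ≤ h A B) := by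
  have hinter : ∀ A B : DM P, A.1 ∩ B.1 ∈ DMset P := by
    intro A B
    have h : A.1 ∩ B.1 = lowerBounds (upperBounds A.1 ∪ upperBounds B.1) := by
      rw [lowerBounds_union, A.2, B.2]
    rw [h]; exact lbu_mem _
  refine ⟨hinter, ?_, ?_, ?_⟩
  · -- top : univ
    have huniv : (Set.univ : Set P) ∈ DMset P := by
      apply subset_antisymm (Set.subset_univ _)
      intro x _ u hu
      exact hu (Set.mem_univ x)
    exact ⟨⟨Set.univ, huniv⟩, fun A => Set.subset_univ _⟩
  · -- bot : lowerBounds univ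
    refine ⟨⟨lowerBounds Set.univ, lbu_mem _⟩, fun A => ?_⟩
    intro x hx
    show x ∈ A.1
    rw [← A.2]
    exact fun u _ => hx (Set.mem_univ u)
  · -- heyting implication
    refine ⟨fun A B => ⟨lowerBounds
      {y | ∃ a ∈ A.1, ∃ u ∈ upperBounds B.1, y = himp a u}, lbu_mem _⟩,
      fun A B C => ?_⟩
    have hchar : ∀ x : P,
        (x ∈ lowerBounds {y | ∃ a ∈ A.1, ∃ u ∈ upperBounds B.1, y = himp a u})
          ↔ ∀ a ∈ A.1, a ⊓ x ∈ B.1 := by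
      intro x
      constructor
      · intro hx a ha
        rw [← B.2]
        intro u hu
        exact (hres a u x).2 (hx ⟨a, ha, u, hu, rfl⟩)
      · rintro hx y ⟨a, ha, u, hu, rfl⟩
        apply (hres a u x).1
        have := hx a ha
        rw [← B.2] at this
        exact this hu
    constructor
    · intro hsub x hx
      refine (hchar x).2 (fun a ha => hsub ?_)
      exact ⟨cut_down A ha inf_le_left, cut_down C hx inf_le_right⟩
    · rintro hle x ⟨hxA, hxC⟩
      have := (hchar x).1 (hle hxC) x hxA
      simpa using this
end

section
/- Let P be a residuated partially ordered monoid and γ a nucleus on P. The image P_γ (with its induced residuated pomonoid structure, where multiplication is x ∘ y = γ(xy)) is an involutive residuated partially ordered monoid (i.e., has a cyclic dualizing element) if and only if there exists a cyclic element d of P such that γ = γ_d, where γ_d(x) = (x ⇝ d) ⇝ d. -/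
/-- Let `γ` be a nucleus on a residuated pomonoid `P`.  The image
`P_γ = {x : γ x = x}` (with its induced residuated pomonoid structure, where
the residuals are inherited from `P`) is an involutive residuated pomonoid —
i.e. it possesses a cyclic dualizing element — if and only if there is a
cyclic element `d` of `P` with `γ = γ_d`, where `γ_d x = (x ⇝ d) ⇝ d` and
`x ⇝ d = ld x d`. -/
theorem nucleus_image_involutive_iff {P : Type*} [PartialOrder P] [Monoid P]
    (ld rd : P → P → P)
    (hld : ∀ x y z : P, x * y ≤ z ↔ y ≤ ld x z)
    (hrd : ∀ x y z : P, x * y ≤ z ↔ x ≤ rd z y)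
    (γ : P → P) (hmono : Monotone γ) (hle : ∀ x : P, x ≤ γ x)
    (hidem : ∀ x : P, γ (γ x) = γ x)
    (hnuc : ∀ a b : P, γ a * γ b ≤ γ (a * b)) :
    -- P_γ has a cyclic dualizing element
    (∃ d : P, γ d = d ∧
        (∀ x : P, γ x = x → ld x d = rd d x) ∧
        (∀ x : P, γ x = x → ld (ld x d) d = x))
    ↔
    -- γ = γ_d for some cyclic element d of P
    (∃ d : P, (∀ x : P, rd d x = ld x d) ∧ γ = fun x => ld (ld x d) d) := by
  -- multiplication is monotone in each argument
  have mull : ∀ (c : P) {a b : P}, a ≤ b → c * a ≤ c * b := by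
    intro c a b h
    exact (hld c a (c * b)).mpr (h.trans ((hld c b (c * b)).mp le_rfl))
  have mulr : ∀ (c : P) {a b : P}, a ≤ b → a * c ≤ b * c := by
    intro c a b h
    exact (hrd a c (b * c)).mpr (h.trans ((hrd b c (b * c)).mp le_rfl))
  -- residuals are antitone in the "numerator"
  have ld_anti : ∀ (e : P) {a b : P}, a ≤ b → ld b e ≤ ld a e := by
    intro e a b h
    exact (hld a (ld b e) e).mp ((mulr (ld b e) h).trans ((hld b (ld b e) e).mpr le_rfl))
  have rd_anti : ∀ (e : P) {a b : P}, a ≤ b → rd e b ≤ rd e a := by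
    intro e a b h
    exact (hrd (rd e b) a e).mp ((mull (rd e b) h).trans ((hrd (rd e b) b e).mpr le_rfl))
  constructor
  · rintro ⟨d, hd, hcyc, hdual⟩
    -- γ (ld x d) = ld x d
    have key1 : ∀ x : P, γ (ld x d) = ld x d := by
      intro x
      refine le_antisymm ?_ (hle _)
      refine (hld x (γ (ld x d)) d).mp ?_
      calc x * γ (ld x d) ≤ γ x * γ (ld x d) := mulr _ (hle x)
        _ ≤ γ (x * ld x d) := hnuc x (ld x d)
        _ ≤ γ d := hmono ((hld x (ld x d) d).mpr le_rfl)
        _ = d := hd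
    -- ld (γ x) d = ld x d
    have key2 : ∀ x : P, ld (γ x) d = ld x d := by
      intro x
      refine le_antisymm (ld_anti d (hle x)) ?_
      refine (hld (γ x) (ld x d) d).mp ?_
      calc γ x * ld x d ≤ γ x * γ (ld x d) := mull _ (hle _)
        _ ≤ γ (x * ld x d) := hnuc x (ld x d)
        _ ≤ γ d := hmono ((hld x (ld x d) d).mpr le_rfl)
        _ = d := hd
    have key1r : ∀ x : P, γ (rd d x) = rd d x := by
      intro x
      refine le_antisymm ?_ (hle _)
      refine (hrd (γ (rd d x)) x d).mp ?_
      calc γ (rd d x) * x ≤ γ (rd d x) * γ x := mull _ (hle x)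
        _ ≤ γ (rd d x * x) := hnuc _ _
        _ ≤ γ d := hmono ((hrd (rd d x) x d).mpr le_rfl)
        _ = d := hd
    have key2r : ∀ x : P, rd d (γ x) = rd d x := by
      intro x
      refine le_antisymm (rd_anti d (hle x)) ?_
      refine (hrd (rd d x) (γ x) d).mp ?_
      calc rd d x * γ x ≤ γ (rd d x) * γ x := mulr _ (hle _)
        _ ≤ γ (rd d x * x) := hnuc _ _
        _ ≤ γ d := hmono ((hrd (rd d x) x d).mpr le_rfl)
        _ = d := hd
    refine ⟨d, fun x => ?_, funext fun x => ?_⟩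
    · rw [← key2r x, ← key2 x, hcyc (γ x) (hidem x)]
    · rw [← key2 x, hdual (γ x) (hidem x)]
  · rintro ⟨d, hcyc, hγ⟩
    have hγd : γ d = d := by
      refine le_antisymm ?_ (hle d)
      have h1 : (1 : P) ≤ ld d d := (hld d 1 d).mp (by rw [mul_one])
      have h2 : ld 1 d ≤ d := by
        have := (hld 1 (ld 1 d) d).mpr le_rfl
        rwa [one_mul] at this
      calc γ d = ld (ld d d) d := by rw [hγ]
        _ ≤ ld 1 d := ld_anti d h1
        _ ≤ d := h2
    refine ⟨d, hγd, fun x _ => (hcyc x).symm, fun x hx => ?_⟩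
    rw [hγ] at hx
    exact hx
end

section
/- An involutive residuated lattice ⟨L, ∧, ∨, ·, \, /, 1, d⟩ is term equivalent to an algebra ⟨L, ∧, ∨, ·, 1, '⟩ where ⟨L, ·, 1⟩ is a monoid, ⟨L, ∧, ∨, '⟩ is an involutive lattice (x'' = x and x ≤ y implies y' ≤ x'), and for all x, y, z: xy ≤ z ⟺ y ≤ (z'x)' ⟺ x ≤ (yz')'. -/
/-- An involutive residuated lattice `⟨L,∧,∨,·,\,/,1,d⟩` is term
equivalent to an algebra `⟨L,∧,∨,·,1,'⟩` where `⟨L,·,1⟩` is a monoid,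
`⟨L,∧,∨,'⟩` is an involutive lattice (`x'' = x` and `'` is order-reversing),
and `xy ≤ z ⟺ y ≤ (z'x)' ⟺ x ≤ (yz')'`.  Over a common lattice-ordered monoid
reduct, the unary operation `'` comes from an involutive residuated lattice
structure iff it satisfies the latter axioms. -/
theorem involutive_residuated_lattice_term_equivalence
    {L : Type*} [Lattice L] [Monoid L] (inv : L → L) :
    (∃ (ld rd : L → L → L) (d : L),
        (∀ x y z : L, x * y ≤ z ↔ y ≤ ld x z) ∧
        (∀ x y z : L, x * y ≤ z ↔ x ≤ rd z y) ∧
        (∀ x : L, rd d x = ld x d) ∧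
        (∀ x : L, ld (ld x d) d = x) ∧
        (∀ x : L, inv x = ld x d))
    ↔
    ((∀ x : L, inv (inv x) = x) ∧
     (∀ x y : L, x ≤ y → inv y ≤ inv x) ∧
     (∀ x y z : L,
        (x * y ≤ z ↔ y ≤ inv (inv z * x)) ∧
        (x * y ≤ z ↔ x ≤ inv (y * inv z)))) := by
  constructor
  · rintro ⟨ld, rd, d, h1, h2, hc, hdd, hinv⟩
    have mono : ∀ a b c : L, a ≤ b → a * c ≤ b * c := fun a b c hab =>
      (h2 a c (b * c)).mpr (hab.trans ((h2 b c (b * c)).mp le_rfl))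
    refine ⟨fun x => by rw [hinv, hinv, hdd], ?_, ?_⟩
    · intro x y hxy
      rw [hinv, hinv]
      exact (h1 x (ld y d) d).mp
        ((mono x y (ld y d) hxy).trans ((h1 y (ld y d) d).mpr le_rfl))
    · intro x y z
      constructor
      · rw [hinv, hinv]
        calc x * y ≤ z ↔ x * y ≤ ld (ld z d) d := by rw [hdd]
          _ ↔ ld z d * (x * y) ≤ d := (h1 _ _ _).symm
          _ ↔ (ld z d * x) * y ≤ d := by rw [mul_assoc]
          _ ↔ y ≤ ld (ld z d * x) d := h1 _ _ _
      · rw [hinv, hinv, ← hc]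
        calc x * y ≤ z ↔ x * y ≤ ld (ld z d) d := by rw [hdd]
          _ ↔ x * y ≤ rd d (ld z d) := by rw [hc]
          _ ↔ (x * y) * ld z d ≤ d := (h2 _ _ _).symm
          _ ↔ x * (y * ld z d) ≤ d := by rw [mul_assoc]
          _ ↔ x ≤ rd d (y * ld z d) := h2 _ _ _
  · rintro ⟨hii, _hanti, h3⟩
    have hd1 : inv (inv 1) = 1 := hii 1
    refine ⟨fun x z => inv (inv z * x), fun z y => inv (y * inv z), inv 1,
      fun x y z => (h3 x y z).1, fun x y z => (h3 x y z).2, ?_, ?_, ?_⟩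
    · intro x; simp only [hd1, mul_one, one_mul]
    · intro x; simp only [hd1, mul_one, hii, one_mul]
    · intro x; simp only [hd1, one_mul]
end

section
/- Let P be a residuated partially ordered monoid and L a join-completion of P which is a residuated lattice whose multiplication extends that of P. If d ∈ P is a cyclic dualizing element of P, then d is a cyclic element of L, and the nucleus image L_{γ_d} is a join- and meet-completion of P_{γ_d} = P; hence L_{γ_d} is the Dedekind-MacNeille completion of P. -/
/-- Let `P` be a residuated pomonoid, join-densely embedded in a
complete residuated lattice `L` whose multiplication and residuals extend
those of `P`.  If `d ∈ P` is a cyclic dualizing element of `P`, then `d` is a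
cyclic element of `L`, and the nucleus image `L_{γ_d} = {x : (x⇝d)⇝d = x}`
(which contains `P = P_{γ_d}`) is both a join- and a meet-completion of `P`;
hence it is the Dedekind-MacNeille completion of `P`. -/
theorem nucleus_image_is_DM_completion {L : Type*} [CompleteLattice L] [Monoid L]
    (ld rd : L → L → L)
    (hld : ∀ x y z : L, x * y ≤ z ↔ y ≤ ld x z)
    (hrd : ∀ x y z : L, x * y ≤ z ↔ x ≤ rd z y)
    (P : Set L) (h1 : (1 : L) ∈ P)
    (hPmul : ∀ x ∈ P, ∀ y ∈ P, x * y ∈ P)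
    (hPres : ∀ x ∈ P, ∀ y ∈ P, ld x y ∈ P ∧ rd y x ∈ P)
    (hdense : ∀ l : L, ∃ X ⊆ P, sSup X = l)
    (d : L) (hd : d ∈ P)
    (hcycP : ∀ x ∈ P, rd d x = ld x d)
    (hdualP : ∀ x ∈ P, ld (ld x d) d = x) :
    -- d is a cyclic element of L
    (∀ x : L, rd d x = ld x d) ∧
    -- P consists of fixed points of γ_d
    (∀ x ∈ P, ld (ld x d) d = x) ∧
    -- every element of L_{γ_d} is a join, within L_{γ_d}, of elements of P
    (∀ a : L, ld (ld a d) d = a →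
      ∃ X ⊆ P, (∀ x ∈ X, x ≤ a) ∧
        ∀ b : L, ld (ld b d) d = b → (∀ x ∈ X, x ≤ b) → a ≤ b) ∧
    -- every element of L_{γ_d} is a meet, within L_{γ_d}, of elements of P
    (∀ a : L, ld (ld a d) d = a →
      ∃ X ⊆ P, (∀ x ∈ X, a ≤ x) ∧
        ∀ b : L, ld (ld b d) d = b → (∀ x ∈ X, b ≤ x) → b ≤ a) := by
  have key1 : ∀ (S : Set L) (t : L), t ≤ ld (sSup S) d ↔ ∀ s ∈ S, t ≤ ld s d := by
    intro S t
    rw [← hld, hrd, sSup_le_iff]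
    constructor
    · intro h s hs
      exact (hld s t d).mp ((hrd s t d).mpr (h s hs))
    · intro h s hs
      exact (hrd s t d).mp ((hld s t d).mpr (h s hs))
  have key2 : ∀ (S : Set L) (t : L), t ≤ rd d (sSup S) ↔ ∀ s ∈ S, t ≤ rd d s := by
    intro S t
    rw [← hrd, hld, sSup_le_iff]
    constructor
    · intro h s hs
      exact (hrd t s d).mp ((hld t s d).mpr (h s hs))
    · intro h s hs
      exact (hld t s d).mp ((hrd t s d).mpr (h s hs))
  refine ⟨?_, hdualP, ?_, ?_⟩
  · intro x
    obtain ⟨X, hXP, hX⟩ := hdense x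
    rw [← hX]
    apply le_antisymm
    · rw [key1]
      intro s hs
      rw [← hcycP s (hXP hs)]
      exact (key2 X _).mp le_rfl s hs
    · rw [key2]
      intro s hs
      rw [hcycP s (hXP hs)]
      exact (key1 X _).mp le_rfl s hs
  · intro a _
    refine ⟨{x | x ∈ P ∧ x ≤ a}, fun x hx => hx.1, fun x hx => hx.2, ?_⟩
    intro b _ hb
    obtain ⟨X', hX'P, hX'⟩ := hdense a
    rw [← hX']
    apply sSup_le
    intro s hs
    exact hb s ⟨hX'P hs, hX' ▸ le_sSup hs⟩
  · intro a ha
    obtain ⟨Y, hYP, hY⟩ := hdense (ld a d)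
    have ha' : ld (sSup Y) d = a := by rw [hY]; exact ha
    refine ⟨(fun y => ld y d) '' Y, ?_, ?_, ?_⟩
    · rintro _ ⟨y, hy, rfl⟩
      exact (hPres y (hYP hy) d hd).1
    · rintro _ ⟨y, hy, rfl⟩
      have := (key1 Y (ld (sSup Y) d)).mp le_rfl y hy
      rwa [ha'] at this
    · intro b _ hB
      rw [← ha']
      exact (key1 Y b).mpr fun y hy => hB _ ⟨y, hy, rfl⟩
end

section
/- If P is an Archimedean partially ordered group (for all x, y: if xⁿ ≤ y for all n ≥ 1 then x ≤ 1), then the Dedekind-MacNeille completion of P with its top and bottom elements removed is a (conditionally complete) partially ordered group: every element of it is invertible. -/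
open Pointwise

section Helpers

variable {G : Type*} [Group G] [PartialOrder G]
    [CovariantClass G G (· * ·) (· ≤ ·)]
    [CovariantClass G G (Function.swap (· * ·)) (· ≤ ·)]

lemma aux_ub_lb_ub (S : Set G) :
    upperBounds (lowerBounds (upperBounds S)) = upperBounds S := by
  apply Set.Subset.antisymm
  · exact upperBounds_mono_set (fun s hs u hu => hu hs)
  · intro t ht z hz
    exact hz ht

lemma aux_ub_mul_gamma_right (X S : Set G) :
    upperBounds (X * lowerBounds (upperBounds S)) = upperBounds (X * S) := by
  apply Set.Subset.antisymm
  · apply upperBounds_mono_set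
    exact Set.mul_subset_mul_left (fun s hs u hu => hu hs)
  · intro t ht z hz
    obtain ⟨x, hx, y, hy, rfl⟩ := hz
    have h1 : x⁻¹ * t ∈ upperBounds S := by
      intro s hs
      rw [le_inv_mul_iff_mul_le]
      exact ht (Set.mul_mem_mul hx hs)
    calc x * y ≤ x * (x⁻¹ * t) := mul_le_mul_right (hy h1) x
    _ = t := by group

lemma aux_ub_mul_gamma_left (X S : Set G) :
    upperBounds (lowerBounds (upperBounds S) * X) = upperBounds (S * X) := by
  apply Set.Subset.antisymm
  · apply upperBounds_mono_set
    exact Set.mul_subset_mul_right (fun s hs u hu => hu hs)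
  · intro t ht z hz
    obtain ⟨y, hy, x, hx, rfl⟩ := hz
    have h1 : t * x⁻¹ ∈ upperBounds S := by
      intro s hs
      rw [le_mul_inv_iff_mul_le]
      exact ht (Set.mul_mem_mul hs hx)
    calc y * x ≤ (t * x⁻¹) * x := mul_le_mul_left (hy h1) x
    _ = t := by group

end Helpers

/-- If `P` is an Archimedean partially ordered group, then the
Dedekind-MacNeille completion of `P` with top and bottom removed — i.e. the
cuts `A = lowerBounds (upperBounds A)` that are nonempty and bounded above —
is a partially ordered group: every such cut `A` is invertible for the induced
multiplication `A ∘ B = γ(A·B)` (where `γ S = lowerBounds (upperBounds S)`),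
with unit the cut `γ {1}`. -/
theorem archimedean_DM_completion_group {G : Type*} [Group G] [PartialOrder G]
    [CovariantClass G G (· * ·) (· ≤ ·)]
    [CovariantClass G G (Function.swap (· * ·)) (· ≤ ·)]
    (harch : ∀ x y : G, (∀ n : ℕ, 1 ≤ n → x ^ n ≤ y) → x ≤ 1)
    (A : Set G) (hA : lowerBounds (upperBounds A) = A)
    (hne : A.Nonempty) (hbdd : (upperBounds A).Nonempty) :
    ∃ B : Set G,
      lowerBounds (upperBounds B) = B ∧ B.Nonempty ∧ (upperBounds B).Nonempty ∧
      lowerBounds (upperBounds (A * B)) = lowerBounds (upperBounds ({1} : Set G)) ∧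
      lowerBounds (upperBounds (B * A)) = lowerBounds (upperBounds ({1} : Set G)) := by
  obtain ⟨a₀, ha₀⟩ := hne
  obtain ⟨u₀, hu₀⟩ := hbdd
  set U : Set G := upperBounds A with hU
  set B : Set G := lowerBounds (upperBounds U⁻¹) with hB
  have hsubB : U⁻¹ ⊆ B := fun s hs u hu => hu hs
  have hub1 : upperBounds ({1} : Set G) = Set.Ici 1 := by
    ext t; simp [upperBounds, Set.mem_Ici]
  refine ⟨B, ?_, ⟨u₀⁻¹, hsubB (Set.inv_mem_inv.mpr hu₀)⟩,
    ⟨a₀⁻¹, ?_⟩, ?_, ?_⟩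
  · rw [hB, aux_ub_lb_ub]
  · -- a₀⁻¹ is an upper bound of B
    rw [hB, aux_ub_lb_ub]
    intro s hs
    have h1 : a₀ ≤ s⁻¹ := hs ha₀
    simpa using inv_le_inv_iff.mpr h1
  · -- A * B
    rw [aux_ub_mul_gamma_right]
    have key : upperBounds (A * U⁻¹) = Set.Ici 1 := by
      apply Set.Subset.antisymm
      · intro t ht
        have hstep : ∀ u ∈ U, t * u ∈ U := by
          intro u hu a ha
          have h := ht (Set.mul_mem_mul ha (Set.inv_mem_inv.mpr hu))
          calc a = (a * u⁻¹) * u := by group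
          _ ≤ t * u := mul_le_mul_left h u
        have hpow : ∀ n : ℕ, t ^ n * u₀ ∈ U := by
          intro n
          induction n with
          | zero => simpa using hu₀
          | succ n ih =>
            have := hstep _ ih
            rw [pow_succ', mul_assoc]
            exact this
        have harch' : t⁻¹ ≤ 1 := by
          apply harch t⁻¹ (u₀ * a₀⁻¹)
          intro n _
          have h1 : a₀ * u₀⁻¹ ≤ t ^ n := by
            have := hpow n ha₀
            rwa [← mul_inv_le_iff_le_mul] at this
          calc t⁻¹ ^ n = (t ^ n)⁻¹ := by rw [inv_pow]
          _ ≤ (a₀ * u₀⁻¹)⁻¹ := inv_le_inv_iff.mpr h1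
          _ = u₀ * a₀⁻¹ := by group
        simpa using inv_le_one'.mp harch'
      · intro t ht z hz
        obtain ⟨a, ha, s, hs, rfl⟩ := hz
        have hu : s⁻¹ ∈ U := hs
        have : a * s ≤ 1 := by
          calc a * s ≤ s⁻¹ * s := mul_le_mul_left (hu ha) s
          _ = 1 := by group
        exact this.trans ht
    rw [key, hub1]
  · -- B * A
    rw [aux_ub_mul_gamma_left]
    have key : upperBounds (U⁻¹ * A) = Set.Ici 1 := by
      apply Set.Subset.antisymm
      · intro t ht
        have hstep : ∀ u ∈ U, u * t ∈ U := by
          intro u hu a ha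
          have h := ht (Set.mul_mem_mul (Set.inv_mem_inv.mpr hu) ha)
          calc a = u * (u⁻¹ * a) := by group
          _ ≤ u * t := mul_le_mul_right h u
        have hpow : ∀ n : ℕ, u₀ * t ^ n ∈ U := by
          intro n
          induction n with
          | zero => simpa using hu₀
          | succ n ih =>
            have := hstep _ ih
            rw [pow_succ, ← mul_assoc]
            exact this
        have harch' : t⁻¹ ≤ 1 := by
          apply harch t⁻¹ (a₀⁻¹ * u₀)
          intro n _
          have h1 : u₀⁻¹ * a₀ ≤ t ^ n := by
            have := hpow n ha₀
            rwa [← inv_mul_le_iff_le_mul] at this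
          calc t⁻¹ ^ n = (t ^ n)⁻¹ := by rw [inv_pow]
          _ ≤ (u₀⁻¹ * a₀)⁻¹ := inv_le_inv_iff.mpr h1
          _ = a₀⁻¹ * u₀ := by group
        simpa using inv_le_one'.mp harch'
      · intro t ht z hz
        obtain ⟨s, hs, a, ha, rfl⟩ := hz
        have hu : s⁻¹ ∈ U := hs
        have : s * a ≤ 1 := by
          calc s * a ≤ s * s⁻¹ := mul_le_mul_right (hu ha) s
          _ = 1 := by group
        exact this.trans ht
    rw [key, hub1]
end

section
/- A class of algebras is a variety of partially ordered groups inside involutive residuated lattices: an involutive residuated lattice ⟨L, ∧, ∨, ·, \, /, 1, d⟩ satisfies d = 1 and x\x = 1 for all x if and only if its monoid reduct is a group (every element has a two-sided inverse) with x\y = x⁻¹y and y/x = yx⁻¹; in particular, from d = 1 and x\x = 1 one derives a·(a\1) = 1 = (1/a)·a for all a. -/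
/-- Partially ordered groups as a variety inside involutive
residuated lattices: an involutive residuated lattice `⟨L,∧,∨,·,\,/,1,d⟩`
satisfies `d = 1` and `x\x = 1` (for all `x`) if and only if it arises from a
partially ordered group, i.e. `d = 1` and the monoid reduct is a group with
`x\y = x⁻¹y` and `y/x = yx⁻¹`; in particular, from `d = 1` and `x\x = 1` one
derives `a·(a\1) = 1 = (1/a)·a` for all `a`. -/
theorem pogroups_as_involutive_residuated_lattices {L : Type*} [Lattice L] [Monoid L]
    (ld rd : L → L → L)
    (hld : ∀ x y z : L, x * y ≤ z ↔ y ≤ ld x z)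
    (hrd : ∀ x y z : L, x * y ≤ z ↔ x ≤ rd z y)
    (d : L)
    (hcyc : ∀ x : L, rd d x = ld x d)
    (hdual : ∀ x : L, ld (ld x d) d = x) :
    ((d = 1 ∧ ∀ x : L, ld x x = 1) ↔
      (d = 1 ∧ ∃ inv : L → L, ∀ a : L,
        a * inv a = 1 ∧ inv a * a = 1 ∧
        (∀ y : L, ld a y = inv a * y) ∧ (∀ y : L, rd y a = y * inv a))) ∧
    ((d = 1 ∧ ∀ x : L, ld x x = 1) →
      ∀ a : L, a * ld a 1 = 1 ∧ rd 1 a * a = 1) := by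
  -- basic monotonicity and evaluation lemmas
  have mull : ∀ {x y : L} (z : L), x ≤ y → z * x ≤ z * y := by
    intro x y z h
    exact (hld z x (z * y)).mpr (le_trans h ((hld z y (z * y)).mp le_rfl))
  have mulr : ∀ {x y : L} (z : L), x ≤ y → x * z ≤ y * z := by
    intro x y z h
    exact (hrd x z (y * z)).mpr (le_trans h ((hrd y z (y * z)).mp le_rfl))
  have ldd : ∀ x z : L, x * ld x z ≤ z := fun x z => (hld x (ld x z) z).mpr le_rfl
  have rdd : ∀ x z : L, rd z x * x ≤ z := fun x z => (hrd (rd z x) x z).mpr le_rfl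
  -- the main construction, assuming d = 1 and x\x = 1
  have main : (d = 1 ∧ ∀ x : L, ld x x = 1) → ∀ a : L,
      a * ld a 1 = 1 ∧ ld a 1 * a = 1 ∧
      (∀ y : L, ld a y = ld a 1 * y) ∧ (∀ y : L, rd y a = y * ld a 1) := by
    rintro ⟨hd, hxx⟩ a
    subst hd
    set n : L → L := fun x => ld x 1 with hn
    have hnn : ∀ x : L, n (n x) = x := hdual
    have comp : ∀ x y : L, n (x * y) = ld y (n x) := by
      intro x y
      apply le_antisymm
      · refine (hld y _ _).mp ((hld x _ _).mp ?_)
        rw [← mul_assoc]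
        exact ldd (x * y) 1
      · refine (hld (x * y) _ _).mp ?_
        rw [mul_assoc]
        exact le_trans (mull x (ldd y (n x))) (ldd x 1)
    have hinv1 : a * n a = 1 := by
      have h1 : n (a * n a) = 1 := by rw [comp]; exact hxx (n a)
      have := hnn (a * n a)
      rw [h1] at this
      rw [← this, hn]; exact hxx 1
    have hinv2 : n a * a = 1 := by
      have h1 : n (n a * a) = 1 := by rw [comp, hnn]; exact hxx a
      have := hnn (n a * a)
      rw [h1] at this
      rw [← this, hn]; exact hxx 1
    refine ⟨hinv1, hinv2, ?_, ?_⟩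
    · intro y
      apply le_antisymm
      · calc ld a y = (n a * a) * ld a y := by rw [hinv2, one_mul]
          _ = n a * (a * ld a y) := mul_assoc _ _ _
          _ ≤ n a * y := mull (n a) (ldd a y)
      · refine (hld a _ _).mp ?_
        calc a * (n a * y) = (a * n a) * y := (mul_assoc _ _ _).symm
          _ = y := by rw [hinv1, one_mul]
          _ ≤ y := le_rfl
    · intro y
      apply le_antisymm
      · calc rd y a = rd y a * (a * n a) := by rw [hinv1, mul_one]
          _ = (rd y a * a) * n a := (mul_assoc _ _ _).symm
          _ ≤ y * n a := mulr (n a) (rdd a y)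
      · refine (hrd _ a y).mp ?_
        calc (y * n a) * a = y * (n a * a) := mul_assoc _ _ _
          _ = y := by rw [hinv2, mul_one]
          _ ≤ y := le_rfl
  constructor
  · constructor
    · rintro ⟨hd, hxx⟩
      refine ⟨hd, fun a => ld a 1, fun a => main ⟨hd, hxx⟩ a⟩
    · rintro ⟨hd, inv, hinv⟩
      refine ⟨hd, fun x => ?_⟩
      rw [(hinv x).2.2.1 x, (hinv x).2.1]
  · intro h a
    obtain ⟨h1, h2, _, _⟩ := main h a
    refine ⟨h1, ?_⟩
    have : rd (1 : L) a = ld a 1 := by rw [← h.1, hcyc, h.1]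
    rw [this]; exact h2
end

section
/- Let P be an integral partially ordered monoid and D a nonempty subset of the order-ideal residuated lattice 𝒪(P) consisting of elements such that for all a ∈ P (identified with principal ideals) and b ∈ D, the residuals a\b and b/a (computed in 𝒪(P)) lie in D. Then the closure system D̄ = {⋀X : X ⊆ D} generated by D in 𝒪(P) is a nucleus-system of 𝒪(P), and hence is itself a residuated lattice under x ∘ y = γ_{D̄}(x·y). -/
open Pointwise

/-- Let `P` be an integral pomonoid and `D` a nonempty family of
order-ideals of `P` such that for every `a ∈ P` (identified with the principal
ideal `↓a`) and `b ∈ D`, the residuals `↓a \ b` and `b / ↓a` (computed in the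
order-ideal residuated lattice `𝒪(P)`, i.e. as set-residuals) belong to `D`.
Then the closure system `D̄ = {⋂S : S ⊆ D}` generated by `D` is a
nucleus-system of `𝒪(P)`, and hence is a residuated lattice under
`x ∘ y = γ_{D̄}(x·y)`. -/
theorem generated_closure_system_nucleus_system {P : Type*} [Monoid P] [PartialOrder P]
    (hmul : ∀ a b c e : P, a ≤ b → c ≤ e → a * c ≤ b * e)
    (hint : ∀ x : P, x ≤ 1)
    (D : Set (Set P)) (hne : D.Nonempty)
    (hDlow : ∀ b ∈ D, IsLowerSet b)
    (hDres : ∀ a : P, ∀ b ∈ D,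
      {z | ∀ x : P, x ≤ a → x * z ∈ b} ∈ D ∧
      {z | ∀ x : P, x ≤ a → z * x ∈ b} ∈ D) :
    ∀ (Dbar : Set (Set P)) (γ : Set P → Set P),
      Dbar = {A | ∃ S ⊆ D, A = ⋂₀ S} →
      γ = (fun X => ⋂₀ {A ∈ Dbar | X ⊆ A}) →
      -- D̄ consists of order-ideals
      ((∀ A ∈ Dbar, IsLowerSet A) ∧
       -- D̄ is a closure system of 𝒪(P): γ is the associated closure operator
       (∀ X : Set P, IsLowerSet X → X ⊆ γ X ∧ γ X ∈ Dbar) ∧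
       -- D̄ is a nucleus-system: it is closed under residuals by order-ideals
       (∀ X : Set P, IsLowerSet X → ∀ A ∈ Dbar,
          {z | ∀ x ∈ X, x * z ∈ A} ∈ Dbar ∧ {z | ∀ x ∈ X, z * x ∈ A} ∈ Dbar) ∧
       -- hence D̄ is a residuated lattice under x ∘ y = γ (x · y)
       (∀ A ∈ Dbar, ∀ B ∈ Dbar, ∀ C ∈ Dbar,
          (γ (A * B) ⊆ C ↔ B ⊆ {z | ∀ x ∈ A, x * z ∈ C}) ∧
          (γ (A * B) ⊆ C ↔ A ⊆ {z | ∀ y ∈ B, z * y ∈ C}))) := by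
  intro Dbar γ hDbar hγ
  subst hDbar hγ
  -- notation
  have hlow : ∀ A ∈ {A | ∃ S ⊆ D, A = ⋂₀ S}, IsLowerSet A := by
    rintro A ⟨S, hS, rfl⟩
    intro x y hxy hx
    simp only [Set.mem_sInter] at hx ⊢
    intro B hB
    exact hDlow B (hS hB) hxy (hx B hB)
  -- X ⊆ γ X
  have hsub : ∀ X : Set P, X ⊆ ⋂₀ {A ∈ {A | ∃ S ⊆ D, A = ⋂₀ S} | X ⊆ A} := by
    intro X z hz
    simp only [Set.mem_sInter, Set.mem_setOf_eq]
    rintro A ⟨-, hXA⟩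
    exact hXA hz
  -- γ X ⊆ C whenever X ⊆ C ∈ Dbar
  have hmin : ∀ X C : Set P, C ∈ {A | ∃ S ⊆ D, A = ⋂₀ S} → X ⊆ C →
      ⋂₀ {A ∈ {A | ∃ S ⊆ D, A = ⋂₀ S} | X ⊆ A} ⊆ C := by
    intro X C hC hXC z hz
    simp only [Set.mem_sInter, Set.mem_setOf_eq] at hz
    exact hz C ⟨hC, hXC⟩
  -- γ X ∈ Dbar
  have hγmem : ∀ X : Set P, ⋂₀ {A ∈ {A | ∃ S ⊆ D, A = ⋂₀ S} | X ⊆ A}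
      ∈ {A | ∃ S ⊆ D, A = ⋂₀ S} := by
    intro X
    refine ⟨{B ∈ D | X ⊆ B}, fun B hB => hB.1, ?_⟩
    apply Set.Subset.antisymm
    · intro z hz
      simp only [Set.mem_sInter, Set.mem_setOf_eq] at hz ⊢
      rintro B ⟨hBD, hXB⟩
      exact hz B ⟨⟨{B}, by simpa using hBD, by simp⟩, hXB⟩
    · intro z hz
      simp only [Set.mem_sInter, Set.mem_setOf_eq] at hz ⊢
      rintro A ⟨⟨S, hS, rfl⟩, hXA⟩
      intro B hB
      exact hz B ⟨hS hB, fun x hx => hXA hx B hB⟩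
  refine ⟨hlow, fun X _ => ⟨hsub X, hγmem X⟩, ?_, ?_⟩
  · -- residuals
    rintro X hX A ⟨S, hS, rfl⟩
    constructor
    · refine ⟨(fun p : P × Set P => {z | ∀ x : P, x ≤ p.1 → x * z ∈ p.2}) '' (X ×ˢ S),
        ?_, ?_⟩
      · rintro B ⟨⟨a, C⟩, ⟨haX, hCS⟩, rfl⟩
        exact (hDres a C (hS hCS)).1
      · ext z
        simp only [Set.mem_setOf_eq, Set.mem_sInter]
        constructor
        · rintro h B ⟨⟨a, C⟩, hp, rfl⟩ x hxa
          obtain ⟨haX, hCS⟩ := Set.mem_prod.mp hp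
          exact hDlow C (hS hCS) (hmul x a z z hxa le_rfl) (h a haX C hCS)
        · intro h a haX C hCS
          exact h _ ⟨(a, C), Set.mem_prod.mpr ⟨haX, hCS⟩, rfl⟩ a le_rfl
    · refine ⟨(fun p : P × Set P => {z | ∀ x : P, x ≤ p.1 → z * x ∈ p.2}) '' (X ×ˢ S),
        ?_, ?_⟩
      · rintro B ⟨⟨a, C⟩, ⟨haX, hCS⟩, rfl⟩
        exact (hDres a C (hS hCS)).2
      · ext z
        simp only [Set.mem_setOf_eq, Set.mem_sInter]
        constructor
        · rintro h B ⟨⟨a, C⟩, hp, rfl⟩ x hxa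
          obtain ⟨haX, hCS⟩ := Set.mem_prod.mp hp
          exact hDlow C (hS hCS) (hmul z z x a le_rfl hxa) (h a haX C hCS)
        · intro h a haX C hCS
          exact h _ ⟨(a, C), Set.mem_prod.mpr ⟨haX, hCS⟩, rfl⟩ a le_rfl
  · -- residuated law
    intro A hA B hB C hC
    have key : (⋂₀ {A' ∈ {A | ∃ S ⊆ D, A = ⋂₀ S} | A * B ⊆ A'}) ⊆ C ↔ A * B ⊆ C := by
      constructor
      · intro h
        exact (hsub (A * B)).trans h
      · intro h
        exact hmin (A * B) C hC h
    rw [key]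
    constructor
    · rw [Set.mul_subset_iff]
      constructor
      · intro h b hb x hx
        exact h x hx b hb
      · intro h x hx b hb
        exact h hb x hx
    · rw [Set.mul_subset_iff]
      constructor
      · intro h a ha y hy
        exact h a ha y hy
      · intro h x hx b hb
        exact h hx b hb
end

section
/- Let L be a language with finitely many operation symbols, K a class of L-algebras, and A an L-algebra. If every finite partial subalgebra of A embeds into a finite member of K (FEP), then every finite full partial subalgebra of A fully embeds into a finite member of K (FEP⁺); conversely FEP⁺ always implies FEP. -/
universe u v

/-- A partial algebra for a signature `σ` with arities `ar`: a carrier together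
with partially-defined operations (modeled via `Option`). -/
structure PAlg (σ : Type u) (ar : σ → ℕ) : Type (max u (v + 1)) where
  carrier : Type v
  op : ∀ s : σ, (Fin (ar s) → carrier) → Option carrier

namespace PAlg

variable {σ : Type u} {ar : σ → ℕ}

/-- A homomorphism of partial algebras: it preserves every defined operation. -/
def IsHom (A B : PAlg σ ar) (φ : A.carrier → B.carrier) : Prop :=
  ∀ (s : σ) (args : Fin (ar s) → A.carrier) (a : A.carrier),
    A.op s args = some a → B.op s (φ ∘ args) = some (φ a)

/-- A partial algebra is total (i.e. an algebra) if all operations are defined. -/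
def IsTotal (A : PAlg σ ar) : Prop :=
  ∀ (s : σ) (args : Fin (ar s) → A.carrier), (A.op s args).isSome

/-- The map `φ : A → B` is full: whenever an operation of `B` applied to images of
arguments from `A` yields an image of an element of `A`, the corresponding
operation is already defined in `A`.  (A full embedding is an injective
homomorphism that is full; its image is then a full partial subalgebra.) -/
def IsFullInto (A B : PAlg σ ar) (φ : A.carrier → B.carrier) : Prop :=
  ∀ (s : σ) (args : Fin (ar s) → A.carrier) (a : A.carrier),
    B.op s (φ ∘ args) = some (φ a) → A.op s args = some a

/-- `A` has the finite embeddability property in the class `K`: every finite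
partial subalgebra of `A` (i.e. finite partial algebra embedded in `A`) embeds
into a finite (total) member of `K`. -/
def FEP (K : PAlg.{u, v} σ ar → Prop) (A : PAlg.{u, v} σ ar) : Prop :=
  ∀ B : PAlg.{u, v} σ ar, Finite B.carrier →
    ∀ φ : B.carrier → A.carrier, Function.Injective φ → IsHom B A φ →
      ∃ C : PAlg σ ar, K C ∧ Finite C.carrier ∧ IsTotal C ∧
        ∃ ψ : B.carrier → C.carrier, Function.Injective ψ ∧ IsHom B C ψ

/-- `A` has the full finite embeddability property in `K`: every finite full
partial subalgebra of `A` fully embeds into a finite (total) member of `K`. -/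
def FEPplus (K : PAlg.{u, v} σ ar → Prop) (A : PAlg.{u, v} σ ar) : Prop :=
  ∀ B : PAlg.{u, v} σ ar, Finite B.carrier →
    ∀ φ : B.carrier → A.carrier, Function.Injective φ → IsHom B A φ →
      IsFullInto B A φ →
      ∃ C : PAlg σ ar, K C ∧ Finite C.carrier ∧ IsTotal C ∧
        ∃ ψ : B.carrier → C.carrier, Function.Injective ψ ∧ IsHom B C ψ ∧
          IsFullInto B C ψ

end PAlg

namespace PAlg

variable {σ : Type u} {ar : σ → ℕ}

open Classical in
/-- The full partial subalgebra of a total algebra `A` induced on a subset `S`. -/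
noncomputable def restrictFull (A : PAlg σ ar) (S : Set A.carrier) (hA : IsTotal A) :
    PAlg σ ar where
  carrier := S
  op s args :=
    if h : (A.op s fun i => (args i).1).get (hA s _) ∈ S then some ⟨_, h⟩ else none

lemma restrictFull_op (A : PAlg σ ar) (S : Set A.carrier) (hA : IsTotal A)
    (s : σ) (args : Fin (ar s) → S) (a : S) :
    (restrictFull A S hA).op s args = some a ↔
      A.op s (fun i => (args i).1) = some a.1 := by
  have hv : A.op s (fun i => (args i).1) =
      some ((A.op s fun i => (args i).1).get (hA s _)) := (Option.some_get _).symm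
  constructor
  · intro h
    simp only [restrictFull] at h
    split_ifs at h with hmem
    · obtain rfl : a = ⟨_, hmem⟩ := (Option.some_inj.mp h).symm
      exact hv
  · intro h
    have hval : (A.op s fun i => (args i).1).get (hA s _) = a.1 :=
      Option.some_inj.mp (hv.symm.trans h)
    simp only [restrictFull]
    rw [dif_pos (hval ▸ a.2)]
    exact congrArg some (Subtype.ext hval)

open Classical in
/-- The pullback partial algebra: extends a partial subalgebra to the full one
induced along an injection `φ`. -/
noncomputable def pullback (B A : PAlg σ ar) (φ : B.carrier → A.carrier) :
    PAlg σ ar where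
  carrier := B.carrier
  op s args :=
    if h : ∃ a, A.op s (φ ∘ args) = some (φ a) then some h.choose else none

lemma pullback_op (B A : PAlg σ ar) (φ : B.carrier → A.carrier)
    (hinj : Function.Injective φ) (s : σ) (args : Fin (ar s) → B.carrier)
    (a : B.carrier) :
    (pullback B A φ).op s args = some a ↔ A.op s (φ ∘ args) = some (φ a) := by
  simp only [pullback]
  constructor
  · intro h
    split_ifs at h with hex
    · obtain rfl : a = hex.choose := (Option.some_inj.mp h).symm
      exact hex.choose_spec
  · intro h
    have hex : ∃ a, A.op s (φ ∘ args) = some (φ a) := ⟨a, h⟩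
    rw [dif_pos hex]
    have : φ hex.choose = φ a := Option.some_inj.mp (hex.choose_spec.symm.trans h)
    exact congrArg some (hinj this)

end PAlg

/-- For a language with finitely many operation symbols, the FEP
of an algebra `A` in a class `K` implies the FEP⁺; conversely, FEP⁺ always
implies FEP. -/
theorem fep_iff_fep_plus {σ : Type u} {ar : σ → ℕ}
    (K : PAlg σ ar → Prop) (A : PAlg σ ar) (hA : PAlg.IsTotal A) :
    (Finite σ → PAlg.FEP K A → PAlg.FEPplus K A) ∧
    (PAlg.FEPplus K A → PAlg.FEP K A) := by
  classical
  constructor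
  · -- FEP → FEP⁺ (finitely many operation symbols)
    intro hσ hfep B hB φ hinj hhom hfull
    have : Finite σ := hσ
    have : Finite B.carrier := hB
    -- enlarge the image of B by all values of operations on tuples from it
    set S : Set A.carrier :=
      Set.range φ ∪ Set.range (fun p : Σ s : σ, Fin (ar s) → B.carrier =>
        (A.op p.1 (φ ∘ p.2)).get (hA p.1 _)) with hSdef
    have hSfin : S.Finite := (Set.finite_range _).union (Set.finite_range _)
    have hSfin' : Finite S := hSfin.to_subtype
    set B' := PAlg.restrictFull A S hA with hB'
    have hB'carr : B'.carrier = S := rfl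
    -- B' embeds into A
    have hvalhom : PAlg.IsHom B' A Subtype.val := by
      intro s args a h
      exact (PAlg.restrictFull_op A S hA s args a).mp h
    have hvalinj : Function.Injective (Subtype.val : B'.carrier → A.carrier) :=
      Subtype.val_injective
    obtain ⟨C, hKC, hCfin, hCtot, ψ, hψinj, hψhom⟩ :=
      hfep B' hSfin' Subtype.val hvalinj hvalhom
    -- the inclusion of B into B'
    have memL : ∀ b, φ b ∈ S := fun b => Or.inl ⟨b, rfl⟩
    set ι : B.carrier → B'.carrier := fun b => ⟨φ b, memL b⟩ with hι
    have hιinj : Function.Injective ι := fun x y h => hinj (congrArg Subtype.val h)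
    refine ⟨C, hKC, hCfin, hCtot, ψ ∘ ι, hψinj.comp hιinj, ?_, ?_⟩
    · -- homomorphism
      intro s args a h
      have h1 : A.op s (φ ∘ args) = some (φ a) := hhom s args a h
      have h2 : B'.op s (ι ∘ args) = some (ι a) :=
        (PAlg.restrictFull_op A S hA s (ι ∘ args) (ι a)).mpr h1
      have := hψhom s (ι ∘ args) (ι a) h2
      exact this
    · -- fullness
      intro s args a h
      -- B' has the operation defined on ι ∘ args, since its value is in S
      set v : A.carrier := (A.op s (φ ∘ args)).get (hA s _) with hv
      have hvS : v ∈ S := Or.inr ⟨⟨s, args⟩, rfl⟩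
      have hAv : A.op s (φ ∘ args) = some v := (Option.some_get _).symm
      have h2 : B'.op s (ι ∘ args) = some ⟨v, hvS⟩ :=
        (PAlg.restrictFull_op A S hA s (ι ∘ args) ⟨v, hvS⟩).mpr hAv
      have h3 : C.op s (ψ ∘ ι ∘ args) = some (ψ ⟨v, hvS⟩) :=
        hψhom s (ι ∘ args) ⟨v, hvS⟩ h2
      have h4 : C.op s ((ψ ∘ ι) ∘ args) = some (ψ (ι a)) := h
      have h5 : ψ ⟨v, hvS⟩ = ψ (ι a) := by
        rw [Function.comp_assoc] at h4
        exact Option.some_inj.mp (h3.symm.trans h4)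
      have h6 : (⟨v, hvS⟩ : S) = ι a := hψinj h5
      have h7 : v = φ a := congrArg Subtype.val h6
      exact hfull s args a (h7 ▸ hAv)
  · -- FEP⁺ → FEP
    intro hplus B hB φ hinj hhom
    set B' := PAlg.pullback B A φ with hB'
    have hhom' : PAlg.IsHom B' A φ := by
      intro s args a h
      exact (PAlg.pullback_op B A φ hinj s args a).mp h
    have hfull' : PAlg.IsFullInto B' A φ := by
      intro s args a h
      exact (PAlg.pullback_op B A φ hinj s args a).mpr h
    obtain ⟨C, hKC, hCfin, hCtot, ψ, hψinj, hψhom, _⟩ :=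
      hplus B' hB φ hinj hhom' hfull'
    refine ⟨C, hKC, hCfin, hCtot, ψ, hψinj, ?_⟩
    intro s args a h
    have h1 : A.op s (φ ∘ args) = some (φ a) := hhom s args a h
    exact hψhom s args a ((PAlg.pullback_op B A φ hinj s args a).mpr h1)
end
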